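/- Let n ≥ 3 and q = q_0² a square prime power. The subfield of F_q generated by the traces of all elements of SU(n, q_0) (determinant-one isometries of a non-degenerate hermitian form on F_q^n) is all of F_q. In particular, for b a generator of F_q^×, there is an element of SU(n,q_0) with trace −b^{q_0−1} + (n−3), and since b^{q_0−1} has multiplicative order q_0+1, any subfield F_{p^r} containing all traces satisfies (q_0+1) ∣ (p^r − 1), forcing p^r = q. -/

import Mathlib

section Aux

variable {F : Type*} [Field F] [Fintype F] {q₀ : ℕ}

lemma aux_two_le (hq : Fintype.card F = q₀ ^ 2) : 2 ≤ q₀ := by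
  by_contra h
  push_neg at h
  have h2 : 2 ≤ Fintype.card F := Fintype.one_lt_card
  have : q₀ ^ 2 ≤ 1 ^ 2 := Nat.pow_le_pow_left (by omega) 2
  omega

lemma aux_fact (hq2 : 2 ≤ q₀) : q₀ ^ 2 - 1 = (q₀ + 1) * (q₀ - 1) := by
  obtain ⟨m, rfl⟩ : ∃ m, q₀ = m + 2 := ⟨q₀ - 2, by omega⟩
  apply Nat.sub_eq_of_eq_add
  show (m + 2) ^ 2 = (m + 2 + 1) * (m + 2 - 1) + 1
  rw [show m + 2 - 1 = m + 1 from rfl]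
  ring

lemma aux_gen (hq : Fintype.card F = q₀ ^ 2) :
    ∃ g : Fˣ, (∀ x : Fˣ, x ∈ Subgroup.zpowers g) ∧ orderOf g = q₀ ^ 2 - 1 := by
  classical
  obtain ⟨g, hg⟩ := IsCyclic.exists_generator (α := Fˣ)
  refine ⟨g, hg, ?_⟩
  rw [orderOf_eq_card_of_forall_mem_zpowers hg, Nat.card_eq_fintype_card,
    Fintype.card_units, hq]

/-- An element of multiplicative order `q₀ + 1`. -/
lemma aux_order (hq : Fintype.card F = q₀ ^ 2) (hq2 : 2 ≤ q₀) :
    ∃ ζ : Fˣ, orderOf ζ = q₀ + 1 := by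
  obtain ⟨g, -, hord⟩ := aux_gen hq
  refine ⟨g ^ (q₀ - 1), ?_⟩
  rw [orderOf_pow, hord, aux_fact hq2]
  rw [Nat.gcd_eq_right ⟨q₀ + 1, by ring⟩]
  exact Nat.mul_div_cancel _ (by omega)

/-- Surjectivity of the norm map onto the fixed field. -/
lemma aux_norm (hq : Fintype.card F = q₀ ^ 2) (hq2 : 2 ≤ q₀) {d : F}
    (hd0 : d ≠ 0) (hd : d ^ q₀ = d) : ∃ u : F, u ≠ 0 ∧ u ^ (q₀ + 1) = d := by
  obtain ⟨g, hg, hord⟩ := aux_gen hq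
  set dU : Fˣ := Units.mk0 d hd0 with hdU
  have hd1 : d ^ (q₀ - 1) = 1 := by
    have h1 : d ^ (q₀ - 1) * d = 1 * d := by
      rw [one_mul, ← pow_succ, show q₀ - 1 + 1 = q₀ by omega, hd]
    exact mul_right_cancel₀ hd0 h1
  have hdU1 : dU ^ (q₀ - 1) = 1 := by
    ext
    push_cast [hdU]
    exact hd1
  obtain ⟨k, hk'⟩ := hg dU
  have hk : g ^ k = dU := hk'
  have h1 : g ^ (k * ((q₀ - 1 : ℕ) : ℤ)) = 1 := by
    rw [zpow_mul, hk, zpow_natCast, hdU1]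
  have h2 : ((orderOf g : ℤ)) ∣ k * ((q₀ - 1 : ℕ) : ℤ) :=
    orderOf_dvd_iff_zpow_eq_one.mpr h1
  rw [hord, aux_fact hq2, Nat.cast_mul] at h2
  have h3 : (((q₀ + 1 : ℕ) : ℤ)) ∣ k := by
    refine (mul_dvd_mul_iff_right (c := ((q₀ - 1 : ℕ) : ℤ)) ?_).mp h2
    have : (0 : ℤ) < ((q₀ - 1 : ℕ) : ℤ) := by
      exact_mod_cast Nat.pos_of_ne_zero (by omega)
    omega
  obtain ⟨j, hj⟩ := h3
  refine ⟨((g ^ j : Fˣ) : F), Units.ne_zero _, ?_⟩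
  have hu : (g ^ j) ^ (q₀ + 1) = dU := by
    rw [← zpow_natCast (g ^ j) (q₀ + 1), ← zpow_mul, mul_comm, ← hj, hk]
  calc ((g ^ j : Fˣ) : F) ^ (q₀ + 1) = (((g ^ j) ^ (q₀ + 1) : Fˣ) : F) := by push_cast; rfl
    _ = d := by rw [hu]; rfl

/-- The "trace" `z + z ^ q₀` is not identically zero. -/
lemma aux_trace_ne (hq : Fintype.card F = q₀ ^ 2) (hq2 : 2 ≤ q₀) :
    ∃ z : F, z + z ^ q₀ ≠ 0 := by
  by_contra h
  push_neg at h
  have h1 : (1 : F) + 1 = 0 := by simpa using h 1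
  have hneg1 : (-1 : F) = 1 := neg_eq_of_add_eq_zero_left h1
  have hfix : ∀ z : F, z ^ q₀ = z := by
    intro z
    have hz := h z
    have : z ^ q₀ = -z := eq_neg_of_add_eq_zero_right hz
    rw [this, ← neg_one_mul, hneg1, one_mul]
  obtain ⟨g, hg, hord⟩ := aux_gen hq
  have hgf : g ^ q₀ = g := by
    ext
    push_cast
    exact hfix g
  have hg1 : g ^ (q₀ - 1) = 1 := by
    have h1' : g ^ (q₀ - 1) * g = 1 * g := by
      rw [one_mul, ← pow_succ, show q₀ - 1 + 1 = q₀ by omega, hgf]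
    exact mul_right_cancel h1'
  have hdvd := orderOf_dvd_of_pow_eq_one hg1
  rw [hord] at hdvd
  have hle := Nat.le_of_dvd (by omega) hdvd
  have : 2 * q₀ ≤ q₀ ^ 2 := by
    calc 2 * q₀ ≤ q₀ * q₀ := Nat.mul_le_mul_right _ hq2
    _ = q₀ ^ 2 := (sq q₀).symm
  omega

end Aux
section ONB

universe u

variable {F : Type*} [Field F] [Fintype F] {q₀ : ℕ} {σ : F →+* F}

lemma exists_onb (hq : Fintype.card F = q₀ ^ 2) (hσ : ∀ x, σ x = x ^ q₀) (n : ℕ) :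
    ∀ (V : Type u) [AddCommGroup V] [Module F V] [FiniteDimensional F V]
      (f : V →ₛₗ[σ] V →ₗ[F] F), (∀ x y, f y x = σ (f x y)) →
      (∀ v, (∀ w, f v w = 0) → v = 0) → Module.finrank F V = n →
      ∃ b : Module.Basis (Fin n) F V, ∀ i j, f (b i) (b j) = if i = j then 1 else 0 := by
  have hq2 : 2 ≤ q₀ := aux_two_le hq
  induction n with
  | zero =>
    intro V _ _ _ f hherm hnd hrank
    have : Subsingleton V := Module.finrank_zero_iff.mp hrank
    exact ⟨Module.Basis.empty V, fun i => i.elim0⟩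
  | succ n ih =>
    intro V _ _ _ f hherm hnd hrank
    have hVnt : Nontrivial V :=
      Module.nontrivial_of_finrank_pos (R := F) (by omega : 0 < Module.finrank F V)
    -- Step 1: an anisotropic vector exists
    have hex : ∃ v : V, f v v ≠ 0 := by
      by_contra hiso
      push_neg at hiso
      obtain ⟨z, hz⟩ := aux_trace_ne hq hq2
      obtain ⟨v, hv0⟩ := exists_ne (0 : V)
      have hw : ∃ w, f v w ≠ 0 := by
        by_contra hw; push_neg at hw; exact hv0 (hnd v hw)
      obtain ⟨w, hw⟩ := hw
      have expand : ∀ c : F, c * f v w + σ (c * f v w) = 0 := by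
        intro c
        have h0 := hiso (v + c • w)
        simp only [map_add, map_smulₛₗ, LinearMap.add_apply, LinearMap.smul_apply,
          map_smul, smul_eq_mul] at h0
        rw [hiso v, hiso w, hherm v w] at h0
        simp only [RingHom.id_apply] at h0
        rw [map_mul]
        linear_combination h0
      have hkey := expand (z * (f v w)⁻¹)
      rw [mul_assoc, inv_mul_cancel₀ hw, mul_one, hσ] at hkey
      exact hz hkey
    obtain ⟨v, hv⟩ := hex
    -- Step 2: normalize
    obtain ⟨u, hu0, hu⟩ := aux_norm hq hq2 hv (by rw [← hσ]; exact (hherm v v).symm)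
    set e : V := u⁻¹ • v with he
    have he1 : f e e = 1 := by
      rw [he]
      simp only [map_smulₛₗ, LinearMap.smul_apply, map_smul, smul_eq_mul, map_inv₀, hσ, RingHom.id_apply]
      rw [← hu, pow_succ]
      field_simp
      rw [← mul_pow, one_div_mul_cancel hu0, one_pow]
    clear_value e
    -- Step 3: the orthogonal complement
    set W : Submodule F V := LinearMap.ker (f e) with hW
    have hmem : ∀ w : V, w ∈ W ↔ f e w = 0 := fun w => LinearMap.mem_ker
    have hWrank : Module.finrank F W = n := by
      have hsurj : Function.Surjective (f e) := by
        intro x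
        exact ⟨x • e, by rw [map_smul, he1, smul_eq_mul, mul_one]⟩
      have hsum := LinearMap.finrank_range_add_finrank_ker (f e)
      rw [LinearMap.range_eq_top.mpr hsurj, finrank_top, Module.finrank_self, hrank,
        ← hW] at hsum
      omega
    let fW : W →ₛₗ[σ] W →ₗ[F] F :=
      { toFun := fun x => (f x).comp W.subtype
        map_add' := by
          intro x y
          simp only [Submodule.coe_add, map_add, LinearMap.add_comp]
        map_smul' := by
          intro c x
          simp only [SetLike.val_smul, map_smulₛₗ, LinearMap.smul_comp] }
    have hfW : ∀ x y : W, fW x y = f (x : V) (y : V) := fun x y => rfl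
    have hhermW : ∀ x y : W, fW y x = σ (fW x y) := fun x y => hherm (x : V) (y : V)
    have hndW : ∀ x : W, (∀ w : W, fW x w = 0) → x = 0 := by
      intro x hx
      have hx1 : (x : V) = 0 := by
        apply hnd
        intro y
        have hy' : y - (f e y) • e ∈ W := by
          rw [hmem, map_sub, map_smul, he1, smul_eq_mul, mul_one, sub_self]
        have h1 : f (x : V) (y - (f e y) • e) = 0 := hx ⟨_, hy'⟩
        have h2 : f (x : V) e = 0 := by
          rw [hherm e (x : V), (hmem (x : V)).mp x.2, map_zero]
        calc f (x : V) y
            = f (x : V) (y - (f e y) • e) + (f e y) * f (x : V) e := by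
              rw [map_sub, map_smul, smul_eq_mul]; ring
          _ = 0 := by rw [h1, h2, mul_zero, add_zero]
      exact Subtype.ext hx1
    obtain ⟨c, hc⟩ := ih W fW hhermW hndW hWrank
    -- Step 4: assemble the basis
    set v' : Fin (n + 1) → V := Fin.cons e (fun i => ((c i : V))) with hv'
    have hli : LinearIndependent F v' := by
      apply LinearIndependent.fin_cons
      · exact c.linearIndependent.map' W.subtype (Submodule.ker_subtype W)
      · intro hmem'
        have hsub : Submodule.span F (Set.range (⇑W.subtype ∘ ⇑c)) ≤ W := by
          rw [Submodule.span_le]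
          rintro _ ⟨i, rfl⟩
          exact (c i).2
        have : f e e = 0 := (hmem e).mp (hsub hmem')
        rw [he1] at this
        exact one_ne_zero this
    have hcard : Fintype.card (Fin (n + 1)) = Module.finrank F V := by
      simp [hrank]
    refine ⟨basisOfLinearIndependentOfCardEqFinrank hli hcard, ?_⟩
    have hc0 : v' 0 = e := rfl
    have hcs : ∀ k : Fin n, v' k.succ = (c k : V) := fun k => rfl
    intro i j
    rw [coe_basisOfLinearIndependentOfCardEqFinrank]
    induction i using Fin.cases with
    | zero =>
      induction j using Fin.cases with
      | zero => rw [hc0, if_pos rfl]; exact he1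
      | succ j' =>
        rw [hc0, hcs, if_neg (Ne.symm (Fin.succ_ne_zero j'))]
        exact (hmem _).mp (c j').2
    | succ i' =>
      induction j using Fin.cases with
      | zero =>
        rw [hcs, hc0, if_neg (Fin.succ_ne_zero i')]
        rw [hherm e _, (hmem _).mp (c i').2, map_zero]
      | succ j' =>
        have h4 := hc i' j'
        rw [hfW] at h4
        rw [hcs, hcs, h4]
        simp only [Fin.succ_inj]

end ONB
section Endgame

variable {F : Type*} [Field F] [Fintype F] {q₀ : ℕ}

lemma aux_subfield_top (hq : Fintype.card F = q₀ ^ 2) (hq2 : 2 ≤ q₀)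
    (ζ : Fˣ) (hζ : orderOf ζ = q₀ + 1) (K : Subfield F) (hαK : (ζ : F) ∈ K) : K = ⊤ := by
  classical
  have : Fintype K := Fintype.ofFinite K
  have hordα : orderOf ((ζ : F)) = q₀ + 1 := by rw [orderOf_units]; exact hζ
  have h5 : orderOf (K.subtype.toMonoidHom (⟨(ζ : F), hαK⟩ : K)) =
      orderOf (⟨(ζ : F), hαK⟩ : K) :=
    orderOf_injective _ (fun a b h => Subtype.ext h) _
  have hordK : orderOf (⟨(ζ : F), hαK⟩ : K) = q₀ + 1 := by rw [← h5]; exact hordα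
  have hne : (⟨(ζ : F), hαK⟩ : K) ≠ 0 := fun h => Units.ne_zero ζ (congrArg Subtype.val h)
  obtain ⟨xu, hxu⟩ := isUnit_iff_ne_zero.mpr hne
  have hNat : Nat.card K = Fintype.card K := Nat.card_eq_fintype_card
  have hK2 : 2 ≤ Fintype.card K := Fintype.one_lt_card
  have hdvd : q₀ + 1 ∣ Nat.card K - 1 := by
    rw [← Nat.card_units]
    have h6 : orderOf xu = q₀ + 1 := by rw [← orderOf_units, hxu, hordK]
    rw [← h6]
    exact orderOf_dvd_natCard xu
  have hfd : FiniteDimensional K F := inferInstance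
  have hcard : Fintype.card F = Fintype.card K ^ Module.finrank K F := Module.card_eq_pow_finrank
  have hm1 : 1 ≤ Module.finrank K F := Module.finrank_pos
  by_cases hm : Module.finrank K F = 1
  · rw [hm, pow_one] at hcard
    have hsurj : Function.Surjective (K.subtype) :=
      ((Fintype.bijective_iff_injective_and_card (K.subtype)).mpr
        ⟨fun a b h => Subtype.ext h, hcard.symm⟩).2
    refine eq_top_iff.mpr fun x _ => ?_
    obtain ⟨y, hy⟩ := hsurj x
    rw [← hy]
    exact y.2
  · exfalso
    have hm2 : 2 ≤ Module.finrank K F := by omega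
    have hle : Fintype.card K ^ 2 ≤ Fintype.card K ^ Module.finrank K F :=
      Nat.pow_le_pow_right (by omega) hm2
    rw [← hcard, hq] at hle
    have hkq : Fintype.card K ≤ q₀ :=
      (Nat.pow_le_pow_iff_left (two_ne_zero)).mp hle
    have hled : q₀ + 1 ≤ Nat.card K - 1 := Nat.le_of_dvd (by omega) hdvd
    omega

end Endgame

/-- For `n ≥ 3`, the subfield of `F_q` (`q = q₀²`) generated by the traces of all elements of
`SU(n, q₀)`, the determinant-one isometries of a non-degenerate hermitian form, is all of
`F_q`. -/
theorem unitary_traces_generate {F V : Type*} [Field F] [Fintype F] [AddCommGroup V] [Module F V]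
    [FiniteDimensional F V]
    (q₀ : ℕ) (hq : Fintype.card F = q₀ ^ 2)
    (σ : F →+* F) (hσ : ∀ x, σ x = x ^ q₀)
    (f : V →ₛₗ[σ] V →ₗ[F] F)
    (hherm : ∀ x y, f y x = σ (f x y))
    (hnd : ∀ v, (∀ w, f v w = 0) → v = 0)
    (hn : 3 ≤ Module.finrank F V) :
    Subfield.closure {x : F | ∃ g : V →ₗ[F] V, LinearMap.det g = 1 ∧
      (∀ v w, f (g v) (g w) = f v w) ∧ LinearMap.trace F V g = x} = ⊤ := by
  classical
  have hq2 : 2 ≤ q₀ := aux_two_le hq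
  set n := Module.finrank F V with hnV
  obtain ⟨b, hb⟩ := exists_onb hq hσ n V f hherm hnd rfl
  obtain ⟨ζ, hζ⟩ := aux_order hq hq2
  set α : F := (ζ : F) with hαdef
  have hα0 : α ≠ 0 := Units.ne_zero ζ
  have hα1 : α ^ (q₀ + 1) = 1 := by
    have h := pow_orderOf_eq_one ζ
    rw [hζ] at h
    calc α ^ (q₀ + 1) = ((ζ ^ (q₀ + 1) : Fˣ) : F) := by push_cast; rfl
      _ = 1 := by rw [h]; rfl
  -- indices
  let i0 : Fin n := ⟨0, by omega⟩
  let i1 : Fin n := ⟨1, by omega⟩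
  let i2 : Fin n := ⟨2, by omega⟩
  have h01 : i0 ≠ i1 := by simp [i0, i1, Fin.ext_iff]
  have h02 : i0 ≠ i2 := by simp [i0, i2, Fin.ext_iff]
  have h12 : i1 ≠ i2 := by simp [i1, i2, Fin.ext_iff]
  let s : Equiv.Perm (Fin n) := Equiv.swap i1 i2
  let d : Fin n → F := fun i => if i = i0 then -α else if i = i1 then α⁻¹ else 1
  let M : Matrix (Fin n) (Fin n) F := Matrix.diagonal d * s.permMatrix F
  let g : V →ₗ[F] V := Matrix.toLin b b M
  have hs0 : s i0 = i0 := Equiv.swap_apply_of_ne_of_ne h01 h02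
  have hs1 : s i1 = i2 := Equiv.swap_apply_left _ _
  have hs2 : s i2 = i1 := Equiv.swap_apply_right _ _
  have hMij : ∀ i j, M i j = d i * (if s i = j then 1 else 0) := by
    intro i j
    show (Matrix.diagonal d * s.permMatrix F) i j = _
    rw [Matrix.diagonal_mul]
    congr 1
    show (s.toPEquiv).toMatrix i j = _
    rw [PEquiv.toMatrix_apply, Equiv.toPEquiv_apply]
    simp only [Option.mem_def, Option.some.injEq]
  -- the action of g on the basis
  have hg : ∀ j, g (b j) = d (s j) • b (s j) := by
    intro j
    rw [show g (b j) = ∑ i, M i j • b i from Matrix.toLin_self b b M j]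
    have hsi : ∀ i, s (s i) = i := fun i => Equiv.swap_apply_self _ _ i
    calc ∑ i, M i j • b i = ∑ i, (if i = s j then d i • b i else 0) := by
          refine Finset.sum_congr rfl fun i _ => ?_
          rw [hMij]
          by_cases h : i = s j
          · rw [if_pos ((congrArg s h).trans (hsi j)), if_pos h, mul_one]
          · rw [if_neg (fun hc => h ((hsi i).symm.trans (congrArg s hc))), if_neg h,
              mul_zero, zero_smul]
      _ = d (s j) • b (s j) := by
          rw [Finset.sum_ite_eq' Finset.univ (s j) (fun i => d i • b i),
            if_pos (Finset.mem_univ _)]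
  -- norms of the diagonal entries
  have hnorm : ∀ i, σ (d i) * d i = 1 := by
    intro i
    show σ (if i = i0 then -α else if i = i1 then α⁻¹ else 1) *
      (if i = i0 then -α else if i = i1 then α⁻¹ else 1) = 1
    by_cases h0 : i = i0
    · rw [if_pos h0, map_neg, hσ, neg_mul_neg, ← pow_succ]
      exact hα1
    · rw [if_neg h0]
      by_cases h1 : i = i1
      · rw [if_pos h1, map_inv₀, hσ, ← mul_inv, ← pow_succ, hα1, inv_one]
      · rw [if_neg h1, map_one, one_mul]
  -- g is an isometry
  have hiso : ∀ v w, f (g v) (g w) = f v w := by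
    have hbasis : ∀ i j, f (g (b i)) (g (b j)) = f (b i) (b j) := by
      intro i j
      have e1 : f (g (b i)) (g (b j)) = d (s j) * (σ (d (s i)) * f (b (s i)) (b (s j))) := by
        rw [hg i, hg j]
        simp only [map_smulₛₗ, LinearMap.smul_apply, map_smul, smul_eq_mul, RingHom.id_apply]
        try ring
      rw [e1, hb (s i) (s j), hb i j]
      by_cases h : i = j
      · subst h
        rw [if_pos rfl, if_pos rfl, mul_one, mul_comm]
        exact hnorm (s i)
      · rw [if_neg (fun hc => h (s.injective hc)), if_neg h, mul_zero, mul_zero]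
    let h2 : V →ₛₗ[σ] V →ₗ[F] F :=
      { toFun := fun v => (f (g v)).comp g
        map_add' := by
          intro x y
          simp only [map_add, LinearMap.add_comp]
        map_smul' := by
          intro c x
          simp only [map_smul, map_smulₛₗ, LinearMap.smul_comp] }
    have heq : h2 = f := by
      refine b.ext fun i => ?_
      refine b.ext fun j => ?_
      exact hbasis i j
    intro v w
    calc f (g v) (g w) = h2 v w := rfl
      _ = f v w := by rw [heq]
  -- determinant
  have hdet : LinearMap.det g = 1 := by
    show LinearMap.det (Matrix.toLin b b M) = 1
    rw [LinearMap.det_toLin]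
    show ((Matrix.diagonal d * s.permMatrix F)).det = 1
    rw [Matrix.det_mul, Matrix.det_diagonal, Matrix.det_permutation,
      Equiv.Perm.sign_swap h12]
    have hprod : ∏ i, d i = -1 := by
      have hsplit : ∀ i : Fin n,
          d i = (if i = i0 then -α else 1) * (if i = i1 then α⁻¹ else 1) := by
        intro i
        show (if i = i0 then -α else if i = i1 then α⁻¹ else 1) = _
        by_cases h0 : i = i0
        · rw [if_pos h0, if_pos h0, if_neg (fun h => h01 (h0 ▸ h)), mul_one]
        · rw [if_neg h0, if_neg h0, one_mul]
      rw [Finset.prod_congr rfl fun i _ => hsplit i, Finset.prod_mul_distrib,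
        Finset.prod_ite_eq' Finset.univ i0 (fun _ => -α),
        Finset.prod_ite_eq' Finset.univ i1 (fun _ => α⁻¹),
        if_pos (Finset.mem_univ _), if_pos (Finset.mem_univ _), neg_mul,
        mul_inv_cancel₀ hα0]
    rw [hprod]
    simp
  -- trace
  have htr : LinearMap.trace F V g = (n : F) - α - 3 := by
    show LinearMap.trace F V (Matrix.toLin b b M) = (n : F) - α - 3
    rw [LinearMap.trace_eq_matrix_trace F b, LinearMap.toMatrix_toLin]
    have hdiag : ∀ i : Fin n, M i i = 1 + ((if i = i0 then -α - 1 else 0) +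
        ((if i = i1 then (-1 : F) else 0) + (if i = i2 then (-1 : F) else 0))) := by
      intro i
      rw [hMij]
      show (if i = i0 then -α else if i = i1 then α⁻¹ else 1) *
        (if s i = i then 1 else 0) = _
      by_cases h0 : i = i0
      · subst h0
        rw [if_pos rfl, if_pos rfl, if_neg h01, if_neg h02, hs0, if_pos rfl]
        ring
      · rw [if_neg h0, if_neg h0]
        by_cases h1 : i = i1
        · subst h1
          rw [if_pos rfl, if_pos rfl, hs1, if_neg (fun hh => h12 hh.symm), if_neg h12]
          ring
        · rw [if_neg h1, if_neg h1]
          by_cases h2' : i = i2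
          · subst h2'
            rw [if_pos rfl, hs2, if_neg h12]
            ring
          · rw [if_neg h2',
              show s i = i from Equiv.swap_apply_of_ne_of_ne h1 h2', if_pos rfl]
            ring
    rw [show (Matrix.diagonal d * s.permMatrix F).trace = ∑ i, M i i from rfl]
    rw [Finset.sum_congr rfl fun i _ => hdiag i, Finset.sum_add_distrib,
      Finset.sum_add_distrib, Finset.sum_add_distrib,
      Finset.sum_ite_eq' Finset.univ i0 (fun _ => -α - 1),
      Finset.sum_ite_eq' Finset.univ i1 (fun _ => (-1 : F)),
      Finset.sum_ite_eq' Finset.univ i2 (fun _ => (-1 : F)),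
      if_pos (Finset.mem_univ _), if_pos (Finset.mem_univ _), if_pos (Finset.mem_univ _),
      Finset.sum_const, Finset.card_univ, Fintype.card_fin, nsmul_eq_mul, mul_one]
    ring
  -- conclude
  have hmemS : ((n : F) - α - 3) ∈ {x : F | ∃ g : V →ₗ[F] V, LinearMap.det g = 1 ∧
      (∀ v w, f (g v) (g w) = f v w) ∧ LinearMap.trace F V g = x} := ⟨g, hdet, hiso, htr⟩
  have h1 := Subfield.subset_closure hmemS
  have h2 : ((n : ℕ) : F) ∈ Subfield.closure {x : F | ∃ g : V →ₗ[F] V, LinearMap.det g = 1 ∧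
      (∀ v w, f (g v) (g w) = f v w) ∧ LinearMap.trace F V g = x} := natCast_mem _ n
  have h3 : (3 : F) ∈ Subfield.closure {x : F | ∃ g : V →ₗ[F] V, LinearMap.det g = 1 ∧
      (∀ v w, f (g v) (g w) = f v w) ∧ LinearMap.trace F V g = x} := by
    simpa using natCast_mem (Subfield.closure {x : F | ∃ g : V →ₗ[F] V, LinearMap.det g = 1 ∧
      (∀ v w, f (g v) (g w) = f v w) ∧ LinearMap.trace F V g = x}) 3
  have h4 := Subfield.sub_mem _ (Subfield.sub_mem _ h2 h3) h1
  have h5 : (n : F) - 3 - ((n : F) - α - 3) = α := by ring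
  rw [h5] at h4
  exact aux_subfield_top hq hq2 ζ hζ _ h4
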